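/- Let G = (V, E) be a finite simple graph and let 𝒦 be the set of cliques of G of size at most 3. Then TSTAB(G) equals the set of f ∈ ℝ^V such that f(x) ≥ 0 for every x ∈ V, f⁺(K) ≤ 1 for every maximal element K of 𝒦 (with respect to inclusion), and f⁺(C) ≤ (|C|−1)/2 for every chordless odd cycle C of G of length at least 5. -/

import Mathlib

variable {V : Type*}

/-- A stable (independent) set of a graph. -/
def IsStableSet (G : SimpleGraph V) (S : Set V) : Prop :=
  ∀ u ∈ S, ∀ v ∈ S, ¬ G.Adj u v

/-- The vertex set of a cycle subgraph of `G`, given by an injective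
parametrization `c : ZMod m → V` (`m ≥ 3`) with consecutive vertices adjacent. -/
def IsCycleSet (G : SimpleGraph V) (C : Set V) : Prop :=
  ∃ (m : ℕ) (c : ZMod m → V), 3 ≤ m ∧ Function.Injective c ∧
    (∀ i, G.Adj (c i) (c (i + 1))) ∧ C = Set.range c

/-- The vertex set of an odd cycle subgraph of `G`. -/
def IsOddCycleSet (G : SimpleGraph V) (C : Set V) : Prop :=
  ∃ (m : ℕ) (c : ZMod m → V), 3 ≤ m ∧ Odd m ∧ Function.Injective c ∧
    (∀ i, G.Adj (c i) (c (i + 1))) ∧ C = Set.range c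

/-- The vertex set of a chordless odd cycle subgraph of `G`: the only edges of `G`
between vertices of the cycle are the cycle edges. -/
def IsChordlessOddCycleSet (G : SimpleGraph V) (C : Set V) : Prop :=
  ∃ (m : ℕ) (c : ZMod m → V), 3 ≤ m ∧ Odd m ∧ Function.Injective c ∧
    (∀ i, G.Adj (c i) (c (i + 1))) ∧
    (∀ i j, G.Adj (c i) (c j) → j = i + 1 ∨ i = j + 1) ∧
    C = Set.range c

/-- A maximal clique of `G`. -/
def IsMaximalClique (G : SimpleGraph V) (K : Set V) : Prop :=
  G.IsClique K ∧ ∀ K' : Set V, G.IsClique K' → K ⊆ K' → K = K'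

/-- Membership in HSTAB(G). -/
def memHSTAB (G : SimpleGraph V) (f : V → ℝ) : Prop :=
  (∀ x, 0 ≤ f x) ∧
  (∀ K : Set V, G.IsClique K → (∑ᶠ v ∈ K, f v) ≤ 1) ∧
  (∀ C : Set V, IsOddCycleSet G C → (∑ᶠ v ∈ C, f v) ≤ ((C.ncard : ℝ) - 1) / 2)

/-- Membership in TSTAB(G). -/
def memTSTAB (G : SimpleGraph V) (f : V → ℝ) : Prop :=
  (∀ x, 0 ≤ f x ∧ f x ≤ 1) ∧
  (∀ x y, G.Adj x y → f x + f y ≤ 1) ∧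
  (∀ C : Set V, IsOddCycleSet G C → (∑ᶠ v ∈ C, f v) ≤ ((C.ncard : ℝ) - 1) / 2)

/-- Membership in QSTAB(G). -/
def memQSTAB (G : SimpleGraph V) (f : V → ℝ) : Prop :=
  (∀ x, 0 ≤ f x) ∧
  (∀ K : Set V, G.IsClique K → (∑ᶠ v ∈ K, f v) ≤ 1)

/-- The stable set polytope STAB(G). -/
def STAB (G : SimpleGraph V) : Set (V → ℝ) :=
  convexHull ℝ {f : V → ℝ | ∃ S : Set V, IsStableSet G S ∧ f = S.indicator 1}

/-- The set `U^(n)` of the paper, as a predicate on pairs `(g, d)`. -/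
def memU (G : SimpleGraph V) (n : ℤ) (g : V → ℤ) (d : ℤ) : Prop :=
  (∀ v, n ≤ g v) ∧
  (∀ K : Set V, IsMaximalClique G K → (∑ᶠ v ∈ K, g v) ≤ d - n) ∧
  (∀ C : Set V, IsChordlessOddCycleSet G C → 5 ≤ C.ncard →
    2 * (∑ᶠ v ∈ C, g v) ≤ d * ((C.ncard : ℤ) - 1) - 2 * n)

section Helpers

lemma zmodSum {m : ℕ} [NeZero m] (g : ZMod m → ℝ) :
    ∑ x : ZMod m, g x = ∑ j ∈ Finset.range m, g (j : ZMod m) := by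
  rw [← Fin.sum_univ_eq_sum_range (fun j => g (j : ZMod m)) m]
  let e : ZMod m ≃ Fin m :=
    ⟨fun x => ⟨x.val, x.val_lt⟩, fun j => ((j : ℕ) : ZMod m),
      fun x => by simp [ZMod.natCast_zmod_val],
      fun j => by ext; simp [ZMod.val_cast_of_lt j.2]⟩
  exact Fintype.sum_equiv e _ _ (fun x => by show g x = g ((⟨x.val, x.val_lt⟩ : Fin m) : ℕ); simp [ZMod.natCast_zmod_val])

lemma finsumMono {V : Type*} [Fintype V] (f : V → ℝ) (h0 : ∀ x, 0 ≤ f x)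
    {A B : Set V} (hAB : A ⊆ B) : (∑ᶠ v ∈ A, f v) ≤ ∑ᶠ v ∈ B, f v := by
  classical
  rw [← Set.Finite.coe_toFinset (Set.toFinite A), ← Set.Finite.coe_toFinset (Set.toFinite B),
    finsum_mem_coe_finset, finsum_mem_coe_finset]
  apply Finset.sum_le_sum_of_subset_of_nonneg
  · intro x hx
    simp only [Set.Finite.mem_toFinset] at *
    exact hAB hx
  · exact fun i _ _ => h0 i

lemma smallCliqueBound {V : Type*} [Fintype V] (G : SimpleGraph V) (f : V → ℝ)
    (h0 : ∀ x, 0 ≤ f x)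
    (hK : ∀ K : Set V, (G.IsClique K ∧ K.ncard ≤ 3) →
          (∀ K' : Set V, G.IsClique K' ∧ K'.ncard ≤ 3 → K ⊆ K' → K = K') →
          (∑ᶠ v ∈ K, f v) ≤ 1) :
    ∀ K : Set V, G.IsClique K → K.ncard ≤ 3 → (∑ᶠ v ∈ K, f v) ≤ 1 := by
  classical
  intro K₀ hcl hcard
  set S : Set (Set V) := {K | G.IsClique K ∧ K.ncard ≤ 3 ∧ K₀ ⊆ K} with hS
  have hfin : S.Finite := Set.toFinite S
  have hne : S.Nonempty := ⟨K₀, hcl, hcard, subset_rfl⟩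
  obtain ⟨K, hKS, hmax⟩ := Set.Finite.exists_maximalFor Set.ncard S hfin hne
  have hmax' : ∀ K' : Set V, G.IsClique K' ∧ K'.ncard ≤ 3 → K ⊆ K' → K = K' := by
    rintro K' ⟨h1, h2⟩ hsub
    have hK'S : K' ∈ S := ⟨h1, h2, hKS.2.2.trans hsub⟩
    have hle : K.ncard ≤ K'.ncard := Set.ncard_le_ncard hsub (Set.toFinite _)
    have heq := hmax hK'S hle
    exact Set.eq_of_subset_of_ncard_le hsub heq.ge (Set.toFinite _)
  exact le_trans (finsumMono f h0 hKS.2.2) (hK K ⟨hKS.1, hKS.2.1⟩ hmax')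

lemma singleBound {V : Type*} [Fintype V] (G : SimpleGraph V) (f : V → ℝ)
    (hcl : ∀ K : Set V, G.IsClique K → K.ncard ≤ 3 → (∑ᶠ v ∈ K, f v) ≤ 1) (x : V) :
    f x ≤ 1 := by
  have := hcl {x} (Set.pairwise_singleton x G.Adj) (by simp)
  rwa [finsum_mem_singleton] at this

lemma edgeBound {V : Type*} [Fintype V] (G : SimpleGraph V) (f : V → ℝ)
    (hcl : ∀ K : Set V, G.IsClique K → K.ncard ≤ 3 → (∑ᶠ v ∈ K, f v) ≤ 1)
    {x y : V} (hxy : G.Adj x y) : f x + f y ≤ 1 := by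
  have hne : x ≠ y := hxy.ne
  have := hcl {x, y} (SimpleGraph.isClique_pair.mpr (fun _ => hxy))
    (by rw [Set.ncard_pair hne]; omega)
  rwa [finsum_mem_pair hne] at this

lemma pathPairBound {V : Type*} (G : SimpleGraph V) (f : V → ℝ) (g : ℕ → V)
    (hedge : ∀ x y, G.Adj x y → f x + f y ≤ 1)
    (hadj : ∀ j : ℕ, G.Adj (g j) (g (j + 1))) :
    ∀ (t a : ℕ), (∑ j ∈ Finset.Ico a (a + 2 * t), f (g j)) ≤ t := by
  intro t
  induction t with
  | zero => simp
  | succ t IH =>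
    intro a
    have e : a + 2 * (t + 1) = (a + 2 * t) + 1 + 1 := by ring
    rw [e, Finset.sum_Ico_succ_top (by omega), Finset.sum_Ico_succ_top (by omega)]
    have h1 := hedge _ _ (hadj (a + 2 * t))
    have h2 := IH a
    push_cast
    linarith

lemma rangeNcard {V : Type*} {m : ℕ} [NeZero m] {c : ZMod m → V}
    (hinj : Function.Injective c) : (Set.range c).ncard = m := by
  rw [← Nat.card_coe_set_eq, Nat.card_range_of_injective hinj,
    Nat.card_eq_fintype_card, ZMod.card]

lemma cycleBound {V : Type*} [Fintype V] (G : SimpleGraph V) (f : V → ℝ)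
    (h0 : ∀ x, 0 ≤ f x)
    (hcl : ∀ K : Set V, G.IsClique K → K.ncard ≤ 3 → (∑ᶠ v ∈ K, f v) ≤ 1)
    (hC : ∀ C : Set V, IsChordlessOddCycleSet G C → 5 ≤ C.ncard →
          (∑ᶠ v ∈ C, f v) ≤ ((C.ncard : ℝ) - 1) / 2) :
    ∀ m : ℕ, ∀ c : ZMod m → V, 3 ≤ m → Odd m → Function.Injective c →
      (∀ i, G.Adj (c i) (c (i + 1))) → (∑ᶠ i, f (c i)) ≤ ((m : ℝ) - 1) / 2 := by
  intro m
  induction m using Nat.strong_induction_on with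
  | _ m IH =>
  intro c hm hodd hinj hadj
  haveI : NeZero m := ⟨by omega⟩
  rw [finsum_eq_sum_of_fintype]
  have hedge : ∀ x y, G.Adj x y → f x + f y ≤ 1 := fun x y h => edgeBound G f hcl h
  have hsum : (∑ᶠ v ∈ Set.range c, f v) = ∑ i : ZMod m, f (c i) := by
    rw [finsum_mem_range hinj, finsum_eq_sum_of_fintype]
  by_cases hch : ∀ i j, G.Adj (c i) (c j) → j = i + 1 ∨ i = j + 1
  · by_cases h3 : m = 3
    · subst h3
      have key : ∀ i j : ZMod 3, i ≠ j → (j = i + 1 ∨ i = j + 1) := by decide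
      have hKcl : G.IsClique (Set.range c) := by
        rintro _ ⟨i, rfl⟩ _ ⟨j, rfl⟩ hne
        have hij : i ≠ j := fun h => hne (by rw [h])
        rcases key i j hij with h | h
        · rw [h]; exact hadj i
        · rw [h]; exact (hadj j).symm
      have h1 := hcl (Set.range c) hKcl (le_of_eq (rangeNcard hinj))
      rw [hsum] at h1
      have h3 : ((3:ℕ):ℝ) = 3 := by norm_num
      rw [h3]
      linarith
    · obtain ⟨a, ha⟩ := hodd
      have h5 : 5 ≤ (Set.range c).ncard := by rw [rangeNcard hinj]; omega
      have := hC (Set.range c) ⟨m, c, hm, ⟨a, ha⟩, hinj, hadj, hch, rfl⟩ h5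
      rwa [hsum, rangeNcard hinj] at this
  · push_neg at hch
    obtain ⟨i, j, hAdj, hne1, hne2⟩ := hch
    set c' : ZMod m → V := fun x => c (x + i) with hc'
    have hinj' : Function.Injective c' := fun x y h => by
      have := hinj h; exact add_right_cancel this
    have hadj' : ∀ x, G.Adj (c' x) (c' (x + 1)) := fun x => by
      have hxy : x + 1 + i = (x + i) + 1 := by ring
      simp only [hc', hxy]
      exact hadj (x + i)
    set k : ZMod m := j - i with hk
    have hchord : G.Adj (c' 0) (c' k) := by
      simp only [hc', hk, zero_add, sub_add_cancel]
      exact hAdj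
    have hij : i ≠ j := fun h => (hAdj.ne) (by rw [h])
    have hk0 : k ≠ 0 := sub_ne_zero.mpr (Ne.symm hij)
    have hk1 : k ≠ 1 := fun h => hne1 (by rw [sub_eq_iff_eq_add] at h; rw [h]; ring)
    have hkm : k ≠ -1 := fun h => hne2 (by rw [sub_eq_iff_eq_add] at h; rw [h]; ring)
    have hkval : 2 ≤ k.val ∧ k.val ≤ m - 2 := by
      have hlt := k.val_lt
      have hv0 : k.val ≠ 0 := fun h => hk0 ((ZMod.val_eq_zero k).mp h)
      have hv1 : k.val ≠ 1 := fun h => hk1 (by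
        have := ZMod.natCast_zmod_val k
        rw [← this, h, Nat.cast_one])
      have hvm : k.val ≠ m - 1 := fun h => hkm (by
        have := ZMod.natCast_zmod_val k
        rw [← this, h, Nat.cast_sub (by omega : 1 ≤ m), ZMod.natCast_self, Nat.cast_one]
        ring)
      omega
    obtain ⟨hk2, hkm2⟩ := hkval
    have hshift : (∑ x : ZMod m, f (c x)) = ∑ x : ZMod m, f (c' x) :=
      (Fintype.sum_equiv (Equiv.addRight i) (fun x => f (c' x)) (fun x => f (c x))
        (fun x => rfl)).symm
    have hcast : ∀ j : ℕ, ((j + 1 : ℕ) : ZMod m) = ((j : ℕ) : ZMod m) + 1 := fun j => by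
      push_cast; ring
    rw [hshift, zmodSum]
    rcases Nat.even_or_odd k.val with hkev | hkodd
    · -- odd cycle on indices 0..k.val, path on k.val+1..m-1
      set n₁ : ℕ := k.val + 1 with hn₁
      haveI : NeZero n₁ := ⟨by omega⟩
      set d : ZMod n₁ → V := fun x => c' ((x.val : ℕ) : ZMod m) with hd
      have hdinj : Function.Injective d := by
        intro x y h
        have h2 : ((x.val : ℕ) : ZMod m) = ((y.val : ℕ) : ZMod m) := hinj' h
        have hx := ZMod.val_cast_of_lt (show x.val < m by have := x.val_lt; omega)
        have hy := ZMod.val_cast_of_lt (show y.val < m by have := y.val_lt; omega)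
        have : x.val = y.val := by rw [← hx, ← hy, h2]
        exact ZMod.val_injective n₁ this
      have hdadj : ∀ x, G.Adj (d x) (d (x + 1)) := by
        intro x
        by_cases hx : x.val = k.val
        · have hx1 : x + 1 = 0 := by
            have hxx : x = ((k.val : ℕ) : ZMod n₁) := by
              rw [← hx, ZMod.natCast_zmod_val]
            rw [hxx, ← Nat.cast_one, ← Nat.cast_add, (show k.val + 1 = n₁ from rfl),
              ZMod.natCast_self]
          have h1 : d x = c' k := by
            simp only [hd, hx, ZMod.natCast_zmod_val]
          have h2 : d (x + 1) = c' 0 := by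
            simp only [hd, hx1, ZMod.val_zero, Nat.cast_zero]
          rw [h1, h2]
          exact hchord.symm
        · have hlt : x.val + 1 < n₁ := by have := x.val_lt; omega
          have hx1 : (x + 1).val = x.val + 1 := by
            have hxx : x + 1 = ((x.val + 1 : ℕ) : ZMod n₁) := by
              rw [Nat.cast_add, Nat.cast_one, ZMod.natCast_zmod_val]
            rw [hxx, ZMod.val_cast_of_lt hlt]
          show G.Adj (c' _) (c' _)
          rw [hx1, hcast x.val]
          exact hadj' _
      have hn₁3 : 3 ≤ n₁ := by omega
      have hn₁m : n₁ < m := by omega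
      have hn₁odd : Odd n₁ := hkev.add_one
      have h1 := IH n₁ hn₁m d hn₁3 hn₁odd hdinj hdadj
      rw [show (∑ᶠ x, f (d x)) = ∑ x : ZMod n₁, f (d x) from finsum_eq_sum_of_fintype _] at h1
      have hdsum : (∑ x : ZMod n₁, f (d x)) = ∑ j ∈ Finset.range n₁, f (c' ((j : ℕ) : ZMod m)) := by
        rw [zmodSum]
        refine Finset.sum_congr rfl (fun j hj => ?_)
        rw [Finset.mem_range] at hj
        simp only [hd, ZMod.val_cast_of_lt hj]
      rw [hdsum] at h1
      set t : ℕ := (m - n₁) / 2 with ht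
      have h2t : n₁ + 2 * t = m := by
        obtain ⟨a, ha⟩ := hodd; obtain ⟨b, hb⟩ := hkev; omega
      have h2 : (∑ j ∈ Finset.Ico n₁ (n₁ + 2 * t), f (c' ((j : ℕ) : ZMod m))) ≤ t :=
        pathPairBound G f (fun j => c' ((j : ℕ) : ZMod m)) hedge
          (fun j => by have := hadj' ((j : ℕ) : ZMod m); simpa [hcast j] using this) t n₁
      rw [h2t] at h2
      have hsplit : (∑ j ∈ Finset.range m, f (c' ((j : ℕ) : ZMod m)))
          = (∑ j ∈ Finset.range n₁, f (c' ((j : ℕ) : ZMod m)))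
            + ∑ j ∈ Finset.Ico n₁ m, f (c' ((j : ℕ) : ZMod m)) := by
        rw [Finset.range_eq_Ico, Finset.range_eq_Ico]
        exact (Finset.sum_Ico_consecutive (fun j => f (c' ((j : ℕ) : ZMod m))) (Nat.zero_le n₁) (le_of_lt hn₁m)).symm
      rw [hsplit]
      have hmr : (m : ℝ) = (n₁ : ℝ) + 2 * t := by exact_mod_cast congrArg (Nat.cast (R := ℝ)) h2t.symm
      have hn₁r : (1 : ℝ) ≤ (n₁ : ℝ) := by exact_mod_cast Nat.one_le_iff_ne_zero.mpr (by omega)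
      linarith
    · -- odd cycle on indices k.val..m-1 and 0, path on 1..k.val-1
      set n₂ : ℕ := m - k.val + 1 with hn₂
      haveI : NeZero n₂ := ⟨by omega⟩
      set d : ZMod n₂ → V := fun x => c' ((k.val + x.val : ℕ) : ZMod m) with hd
      have hdinj : Function.Injective d := by
        intro x y h
        have h2 : ((k.val + x.val : ℕ) : ZMod m) = ((k.val + y.val : ℕ) : ZMod m) := hinj' h
        rw [Nat.cast_add, Nat.cast_add] at h2
        have h3 : ((x.val : ℕ) : ZMod m) = ((y.val : ℕ) : ZMod m) := by
          exact add_left_cancel h2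
        have hx := ZMod.val_cast_of_lt (show x.val < m by have := x.val_lt; omega)
        have hy := ZMod.val_cast_of_lt (show y.val < m by have := y.val_lt; omega)
        have : x.val = y.val := by rw [← hx, ← hy, h3]
        exact ZMod.val_injective n₂ this
      have hdadj : ∀ x, G.Adj (d x) (d (x + 1)) := by
        intro x
        by_cases hx : x.val = n₂ - 1
        · have hx1 : x + 1 = 0 := by
            have hxx : x = ((n₂ - 1 : ℕ) : ZMod n₂) := by rw [← hx, ZMod.natCast_zmod_val]
            rw [hxx, ← Nat.cast_add_one, (show n₂ - 1 + 1 = n₂ by omega), ZMod.natCast_self]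
          have h1 : d x = c' 0 := by
            simp only [hd, hx]
            rw [(show k.val + (n₂ - 1) = m by omega), ZMod.natCast_self]
          have h2 : d (x + 1) = c' k := by
            simp only [hd, hx1, ZMod.val_zero, Nat.add_zero, ZMod.natCast_zmod_val]
          rw [h1, h2]
          exact hchord
        · have hlt : x.val + 1 < n₂ := by have := x.val_lt; omega
          have hx1 : (x + 1).val = x.val + 1 := by
            have hxx : x + 1 = ((x.val + 1 : ℕ) : ZMod n₂) := by
              rw [Nat.cast_add, Nat.cast_one, ZMod.natCast_zmod_val]
            rw [hxx, ZMod.val_cast_of_lt hlt]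
          show G.Adj (c' _) (c' _)
          rw [hx1, (show k.val + (x.val + 1) = (k.val + x.val) + 1 by ring), hcast]
          exact hadj' _
      have hn₂3 : 3 ≤ n₂ := by omega
      have hn₂m : n₂ < m := by omega
      have hn₂odd : Odd n₂ := by
        obtain ⟨a, ha⟩ := hodd
        obtain ⟨b, hb⟩ := hkodd
        exact ⟨a - b, by omega⟩
      have h1 := IH n₂ hn₂m d hn₂3 hn₂odd hdinj hdadj
      rw [show (∑ᶠ x, f (d x)) = ∑ x : ZMod n₂, f (d x) from finsum_eq_sum_of_fintype _] at h1
      have hdsum : (∑ x : ZMod n₂, f (d x))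
          = ∑ j ∈ Finset.range n₂, f (c' ((k.val + j : ℕ) : ZMod m)) := by
        rw [zmodSum]
        refine Finset.sum_congr rfl (fun j hj => ?_)
        rw [Finset.mem_range] at hj
        simp only [hd, ZMod.val_cast_of_lt hj]
      rw [hdsum] at h1
      have hIco : (∑ j ∈ Finset.range n₂, f (c' ((k.val + j : ℕ) : ZMod m)))
          = ∑ j ∈ Finset.Ico k.val (k.val + n₂), f (c' ((j : ℕ) : ZMod m)) := by
        rw [Finset.sum_Ico_eq_sum_range]
        simp only [Nat.add_sub_cancel_left]
      have htop : k.val + n₂ = m + 1 := by omega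
      have hIco2 : (∑ j ∈ Finset.Ico k.val (k.val + n₂), f (c' ((j : ℕ) : ZMod m)))
          = (∑ j ∈ Finset.Ico k.val m, f (c' ((j : ℕ) : ZMod m))) + f (c' 0) := by
        rw [htop, Finset.sum_Ico_succ_top (by omega), ZMod.natCast_self]
      rw [hIco, hIco2] at h1
      set t : ℕ := (k.val - 1) / 2 with ht
      have h2t : 1 + 2 * t = k.val := by obtain ⟨b, hb⟩ := hkodd; omega
      have h2 : (∑ j ∈ Finset.Ico 1 (1 + 2 * t), f (c' ((j : ℕ) : ZMod m))) ≤ t :=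
        pathPairBound G f (fun j => c' ((j : ℕ) : ZMod m)) hedge
          (fun j => by have := hadj' ((j : ℕ) : ZMod m); simpa [hcast j] using this) t 1
      rw [h2t] at h2
      have hsplit : (∑ j ∈ Finset.range m, f (c' ((j : ℕ) : ZMod m)))
          = f (c' 0) + (∑ j ∈ Finset.Ico 1 k.val, f (c' ((j : ℕ) : ZMod m)))
            + ∑ j ∈ Finset.Ico k.val m, f (c' ((j : ℕ) : ZMod m)) := by
        rw [Finset.range_eq_Ico,
          ← Finset.sum_Ico_consecutive _ (Nat.zero_le k.val) (by omega : k.val ≤ m),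
          ← Finset.sum_Ico_consecutive _ (Nat.zero_le 1) (by omega : 1 ≤ k.val)]
        congr 1
        congr 1
        rw [Finset.sum_Ico_eq_sum_range]
        norm_num
      rw [hsplit]
      have hmr : (n₂ : ℝ) + (k.val : ℝ) = (m : ℝ) + 1 := by
        exact_mod_cast congrArg (Nat.cast (R := ℝ)) (by omega : n₂ + k.val = m + 1)
      have htr : (k.val : ℝ) = 1 + 2 * t := by exact_mod_cast congrArg (Nat.cast (R := ℝ)) h2t.symm
      linarith

end Helpers

/-- TSTAB(G) is cut out by nonnegativity, the inequalities for
maximal elements of the set of cliques of size at most 3, and the inequalities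
for chordless odd cycles of length at least 5. -/
theorem stmt10 {V : Type*} [Fintype V] (G : SimpleGraph V) (f : V → ℝ) :
    memTSTAB G f ↔
      ((∀ x, 0 ≤ f x) ∧
       (∀ K : Set V, (G.IsClique K ∧ K.ncard ≤ 3) →
          (∀ K' : Set V, G.IsClique K' ∧ K'.ncard ≤ 3 → K ⊆ K' → K = K') →
          (∑ᶠ v ∈ K, f v) ≤ 1) ∧
       (∀ C : Set V, IsChordlessOddCycleSet G C → 5 ≤ C.ncard →
          (∑ᶠ v ∈ C, f v) ≤ ((C.ncard : ℝ) - 1) / 2)) := by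
  classical
  constructor
  · rintro ⟨h01, hedge, hcyc⟩
    refine ⟨fun x => (h01 x).1, ?_, ?_⟩
    · rintro K ⟨hKcl, hK3⟩ -
      have hfin : K.Finite := Set.toFinite K
      rcases (by omega : K.ncard = 0 ∨ K.ncard = 1 ∨ K.ncard = 2 ∨ K.ncard = 3) with h|h|h|h
      · have hKe : K = ∅ := (Set.ncard_eq_zero hfin).mp h
        rw [hKe, finsum_mem_empty]
        norm_num
      · obtain ⟨a, rfl⟩ := Set.ncard_eq_one.mp h
        rw [finsum_mem_singleton]
        exact (h01 a).2
      · obtain ⟨a, b, hab, rfl⟩ := Set.ncard_eq_two.mp h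
        rw [finsum_mem_pair hab]
        exact hedge a b (hKcl (by simp) (by simp) hab)
      · obtain ⟨a, b, e, hab, hae, hbe, rfl⟩ := Set.ncard_eq_three.mp h
        have hab' : G.Adj a b := hKcl (by simp) (by simp) hab
        have hae' : G.Adj a e := hKcl (by simp) (by simp) hae
        have hbe' : G.Adj b e := hKcl (by simp) (by simp) hbe
        set g : ZMod 3 → V := fun i => if i = 0 then a else if i = 1 then b else e with hg
        have tri : ∀ i : ZMod 3, i = 0 ∨ i = 1 ∨ i = 2 := by decide
        have hg0 : g 0 = a := by simp [hg]
        have hg1 : g 1 = b := by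
          have h10 : ((1 : ZMod 3) = 0) = False := by simp [show ¬(1 : ZMod 3) = 0 by decide]
          simp only [hg, h10, if_false, eq_self_iff_true, if_true]
        have hg2 : g 2 = e := by
          have h20 : ((2 : ZMod 3) = 0) = False := by simp [show ¬(2 : ZMod 3) = 0 by decide]
          have h21 : ((2 : ZMod 3) = 1) = False := by simp [show ¬(2 : ZMod 3) = 1 by decide]
          simp only [hg, h20, h21, if_false]
        have hginj : Function.Injective g := by
          intro x y hxy
          rcases tri x with rfl|rfl|rfl <;> rcases tri y with rfl|rfl|rfl <;>
            simp_all [hg0, hg1, hg2] <;> tauto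
        have hgadj : ∀ i : ZMod 3, G.Adj (g i) (g (i + 1)) := by
          intro i
          rcases tri i with rfl|rfl|rfl
          · rw [(by decide : (0 : ZMod 3) + 1 = 1), hg0, hg1]; exact hab'
          · rw [(by decide : (1 : ZMod 3) + 1 = 2), hg1, hg2]; exact hbe'
          · rw [(by decide : (2 : ZMod 3) + 1 = 0), hg2, hg0]; exact hae'.symm
        have hrange : Set.range g = {a, b, e} := by
          ext v
          constructor
          · rintro ⟨x, rfl⟩
            rcases tri x with rfl|rfl|rfl
            · rw [hg0]; exact Or.inl rfl
            · rw [hg1]; exact Or.inr (Or.inl rfl)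
            · rw [hg2]; exact Or.inr (Or.inr rfl)
          · rintro (rfl|rfl|rfl)
            exacts [⟨0, hg0⟩, ⟨1, hg1⟩, ⟨2, hg2⟩]
        have := hcyc {a, b, e} ⟨3, g, le_refl 3, ⟨1, by norm_num⟩, hginj, hgadj, hrange.symm⟩
        rw [h] at this
        have h3 : ((3 : ℕ) : ℝ) = 3 := by norm_num
        rw [h3] at this
        linarith
    · rintro C ⟨m, c, hm, hodd, hinj, hadj, hch, rfl⟩ h5
      exact hcyc _ ⟨m, c, hm, hodd, hinj, hadj, rfl⟩
  · rintro ⟨h0, hKmax, hC⟩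
    have hcl := smallCliqueBound G f h0 hKmax
    refine ⟨fun x => ⟨h0 x, singleBound G f hcl x⟩,
      fun x y hxy => edgeBound G f hcl hxy, ?_⟩
    rintro C ⟨m, c, hm, hodd, hinj, hadj, rfl⟩
    haveI : NeZero m := ⟨by omega⟩
    rw [finsum_mem_range hinj, rangeNcard hinj]
    exact cycleBound G f h0 hcl hC m c hm hodd hinj hadj
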